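/- The difference between the two mean concentrations is controlled by the difference of their forcing terms through the weighted Grönwall-type estimate |C̄_G(t) − C̄_δ(t)| ≤ (k/(1 + k C₀ t)²) ∫₀ᵗ |g_δ(τ) − g_G(τ)| (1 + k C₀ τ)² dτ for all t ≥ 0. -/

import Mathlib

open Set

lemma conc_lower_bound (k C₀ : ℝ) (hk : 0 < k) (hC₀ : 0 < C₀) (g C : ℝ → ℝ)
    (hg_nonpos : ∀ t ∈ Set.Ici (0 : ℝ), g t ≤ 0)
    (hinit : C 0 = C₀)
    (hderiv : ∀ t ∈ Set.Ici (0 : ℝ),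
      HasDerivWithinAt C (-k * ((C t) ^ 2 + g t)) (Set.Ici 0) t) :
    ∀ t ∈ Set.Ici (0 : ℝ), C₀ / (1 + k * C₀ * t) ≤ C t := by
  intro b hb
  simp only [mem_Ici] at hb
  have hu : ∀ x : ℝ, 0 ≤ x → 0 < 1 + k * C₀ * x := fun x hx => by positivity
  have hB1 : (0:ℝ) < 1 + b := by linarith
  set y : ℝ → ℝ := fun x => C₀ * (1 + k * C₀ * x)⁻¹ with hy
  have hyderiv : ∀ x : ℝ, 0 ≤ x → HasDerivAt y (-k * (y x) ^ 2) x := by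
    intro x hx
    have h1 : HasDerivAt (fun x : ℝ => 1 + k * C₀ * x) (k * C₀) x := by
      simpa using ((hasDerivAt_id x).const_mul (k * C₀)).const_add 1
    have h3 := (h1.inv (hu x hx).ne').const_mul C₀
    refine h3.congr_deriv ?_
    rw [hy]
    field_simp
  have hycont : ContinuousOn y (Icc 0 b) :=
    continuousOn_const.mul (((continuous_const.add (continuous_const.mul
      continuous_id)).continuousOn).inv₀ fun x hx => (hu x hx.1).ne')
  have hCcont : ContinuousOn C (Ici 0) := fun x hx => (hderiv x hx).continuousWithinAt
  have key : ∀ ε > (0:ℝ), ε < C₀ / ((1 + k * C₀ * b) * (1 + b)) → y b - C b ≤ ε * (1 + b) := by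
    intro ε hε hεsmall
    have hq : ε * (1 + b) < C₀ / (1 + k * C₀ * b) := by
      rw [div_mul_eq_div_div] at hεsmall
      exact (lt_div_iff₀ hB1).1 hεsmall
    have := image_le_of_deriv_right_lt_deriv_boundary'
      (f := fun x => y x - C x)
      (f' := fun x => -k * (y x) ^ 2 - (-k * ((C x) ^ 2 + g x)))
      (a := 0) (b := b)
      (B := fun x => ε * (1 + x)) (B' := fun _ => ε)
      ?hf ?hf' ?ha ?hB ?hB' ?bound (right_mem_Icc.2 hb)
    · exact this
    case hf => exact hycont.sub (hCcont.mono Icc_subset_Ici_self)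
    case hf' =>
      intro x hx
      exact ((hyderiv x hx.1).hasDerivWithinAt.mono (Ici_subset_Ici.2 hx.1)).sub
        ((hderiv x hx.1).mono (Ici_subset_Ici.2 hx.1))
    case ha =>
      simp [hy, hinit]
      positivity
    case hB =>
      exact (continuous_const.mul (continuous_const.add continuous_id)).continuousOn
    case hB' =>
      intro x hx
      simpa using (((hasDerivAt_id x).const_add 1).const_mul ε).hasDerivWithinAt
    case bound =>
      intro x hx hfB
      have hfB' : y x - C x = ε * (1 + x) := hfB
      have hx0 : (0:ℝ) ≤ x := hx.1
      have hux : 0 < 1 + k * C₀ * x := hu x hx0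
      have hyx : 0 < y x := by simp only [hy]; positivity
      have hgx := hg_nonpos x hx0
      have hybound : C₀ / (1 + k * C₀ * b) ≤ y x := by
        rw [hy]
        simp only
        rw [← div_eq_mul_inv]
        gcongr
        nlinarith [hx.2]
      have hd0 : 0 < ε * (1 + x) := by positivity
      have hd : ε * (1 + x) < y x := by
        have : ε * (1 + x) ≤ ε * (1 + b) := by nlinarith [hx.2]
        linarith
      show -k * (y x) ^ 2 - (-k * ((C x) ^ 2 + g x)) < ε
      have hCx : C x = y x - ε * (1 + x) := by linarith
      rw [hCx]
      nlinarith [mul_pos (mul_pos hk hd0) (by linarith : (0:ℝ) < 2 * y x - ε * (1 + x)),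
        mul_nonpos_of_nonneg_of_nonpos hk.le hgx]
  have hM : 0 < C₀ / ((1 + k * C₀ * b) * (1 + b)) := by positivity
  have hfinal : y b - C b ≤ 0 := by
    by_contra h
    push_neg at h
    set d := y b - C b with hd
    set ε := min (C₀ / ((1 + k * C₀ * b) * (1 + b)) / 2) (d / (2 * (1 + b))) with hε
    have hεpos : 0 < ε := lt_min (by positivity) (by positivity)
    have h1 := key ε hεpos (lt_of_le_of_lt (min_le_left _ _) (by linarith))
    have e2 : (d / (2 * (1 + b))) * (1 + b) = d / 2 := by
      field_simp
    have h2 : ε * (1 + b) ≤ d / 2 := by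
      rw [← e2]
      exact mul_le_mul_of_nonneg_right (min_le_right _ _) hB1.le
    linarith
  have : y b = C₀ / (1 + k * C₀ * b) := by rw [hy]; simp only [div_eq_mul_inv]
  linarith [hfinal, this ▸ hfinal]

lemma conc_diff_one_side (k C₀ : ℝ) (hk : 0 < k) (hC₀ : 0 < C₀)
    (gδ gG Cδ CG : ℝ → ℝ)
    (hgδ_cont : ContinuousOn gδ (Set.Ici 0))
    (hgG_cont : ContinuousOn gG (Set.Ici 0))
    (hgδ_nonpos : ∀ t ∈ Set.Ici (0 : ℝ), gδ t ≤ 0)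
    (hgG_nonpos : ∀ t ∈ Set.Ici (0 : ℝ), gG t ≤ 0)
    (hinitδ : Cδ 0 = C₀) (hinitG : CG 0 = C₀)
    (hderivδ : ∀ t ∈ Set.Ici (0 : ℝ),
      HasDerivWithinAt Cδ (-k * ((Cδ t) ^ 2 + gδ t)) (Set.Ici 0) t)
    (hderivG : ∀ t ∈ Set.Ici (0 : ℝ),
      HasDerivWithinAt CG (-k * ((CG t) ^ 2 + gG t)) (Set.Ici 0) t) :
    ∀ t ∈ Set.Ici (0 : ℝ),
      (1 + k * C₀ * t) ^ 2 * (CG t - Cδ t) ≤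
        k * ∫ τ in (0 : ℝ)..t, |gδ τ - gG τ| * (1 + k * C₀ * τ) ^ 2 := by
  intro t ht
  simp only [mem_Ici] at ht
  have hu : ∀ x : ℝ, 0 ≤ x → 0 < 1 + k * C₀ * x := fun x hx => by positivity
  have ht1 : (0:ℝ) < 1 + t := by linarith
  -- extended integrand, continuous on all of ℝ
  set h : ℝ → ℝ := fun τ => |gδ (max τ 0) - gG (max τ 0)| * (1 + k * C₀ * τ) ^ 2 with hh
  have hmax : ∀ τ : ℝ, max τ 0 ∈ Ici (0:ℝ) := fun τ => le_max_right τ 0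
  have hcont_max : Continuous fun τ : ℝ => max τ 0 := continuous_id.max continuous_const
  have hhcont : Continuous h := by
    apply Continuous.mul
    · exact ((hgδ_cont.comp_continuous hcont_max hmax).sub
        (hgG_cont.comp_continuous hcont_max hmax)).abs
    · exact (continuous_const.add (continuous_const.mul continuous_id)).pow 2
  set H : ℝ → ℝ := fun x => ∫ τ in (0:ℝ)..x, h τ with hH
  have hHderiv : ∀ x : ℝ, HasDerivAt H (h x) x := fun x =>
    (hhcont.integral_hasStrictDerivAt 0 x).hasDerivAt
  have hHcont : Continuous H := continuous_iff_continuousAt.2 fun x =>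
    (hHderiv x).continuousAt
  have hhnonneg : ∀ τ : ℝ, 0 ≤ h τ := fun τ => mul_nonneg (abs_nonneg _) (sq_nonneg _)
  -- the two lower bounds
  have hlbδ := conc_lower_bound k C₀ hk hC₀ gδ Cδ hgδ_nonpos hinitδ hderivδ
  have hlbG := conc_lower_bound k C₀ hk hC₀ gG CG hgG_nonpos hinitG hderivG
  have key : ∀ ε > (0:ℝ),
      (1 + k * C₀ * t) ^ 2 * (CG t - Cδ t) ≤ k * H t + ε * (1 + t) := by
    intro ε hε
    have := image_le_of_deriv_right_lt_deriv_boundary'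
      (f := fun x => (1 + k * C₀ * x) ^ 2 * (CG x - Cδ x))
      (f' := fun x => 2 * (1 + k * C₀ * x) * (k * C₀) * (CG x - Cδ x) +
        (1 + k * C₀ * x) ^ 2 *
          ((-k * ((CG x) ^ 2 + gG x)) - (-k * ((Cδ x) ^ 2 + gδ x))))
      (a := 0) (b := t)
      (B := fun x => k * H x + ε * (1 + x)) (B' := fun x => k * h x + ε)
      ?Hf ?Hf' ?Ha ?HB ?HB' ?Hbound (right_mem_Icc.2 ht)
    · exact this
    case Hf =>
      apply ContinuousOn.mul
      · exact ((continuous_const.add (continuous_const.mul continuous_id)).pow 2).continuousOn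
      · have hCGc : ContinuousOn CG (Ici 0) := fun x hx => (hderivG x hx).continuousWithinAt
        have hCδc : ContinuousOn Cδ (Ici 0) := fun x hx => (hderivδ x hx).continuousWithinAt
        exact (hCGc.mono Icc_subset_Ici_self).sub (hCδc.mono Icc_subset_Ici_self)
    case Hf' =>
      intro x hx
      have hw : HasDerivAt (fun x : ℝ => (1 + k * C₀ * x) ^ 2)
          (2 * (1 + k * C₀ * x) * (k * C₀)) x := by
        have h1 : HasDerivAt (fun x : ℝ => 1 + k * C₀ * x) (k * C₀) x := by
          simpa using ((hasDerivAt_id x).const_mul (k * C₀)).const_add 1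
        refine (h1.pow 2).congr_deriv ?_
        push_cast
        ring
      exact (hw.hasDerivWithinAt.mono (Ici_subset_Ici.2 hx.1)).mul
        (((hderivG x hx.1).mono (Ici_subset_Ici.2 hx.1)).sub
          ((hderivδ x hx.1).mono (Ici_subset_Ici.2 hx.1)))
    case Ha =>
      simp [hH, hinitδ, hinitG]
      positivity
    case HB =>
      exact ((continuous_const.mul hHcont).add
        (continuous_const.mul (continuous_const.add continuous_id))).continuousOn
    case HB' =>
      intro x hx
      have := ((hHderiv x).const_mul k).add
        (((hasDerivAt_id x).const_add 1).const_mul ε)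
      refine this.hasDerivWithinAt.congr_deriv ?_
      ring
    case Hbound =>
      intro x hx hfB
      have hfB' : (1 + k * C₀ * x) ^ 2 * (CG x - Cδ x) = k * H x + ε * (1 + x) := hfB
      have hx0 : (0:ℝ) ≤ x := hx.1
      have hux : 0 < 1 + k * C₀ * x := hu x hx0
      have hHnn : 0 ≤ H x := intervalIntegral.integral_nonneg hx0 fun τ _ => hhnonneg τ
      have hd : 0 < CG x - Cδ x := by
        have hBpos : 0 < k * H x + ε * (1 + x) :=
          add_pos_of_nonneg_of_pos (mul_nonneg hk.le hHnn) (by positivity)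
        nlinarith [sq_nonneg (1 + k * C₀ * x)]
      have hyδ : C₀ ≤ Cδ x * (1 + k * C₀ * x) := by
        have := hlbδ x hx0
        rw [div_le_iff₀ hux] at this
        linarith
      have hyG : C₀ ≤ CG x * (1 + k * C₀ * x) := by
        have := hlbG x hx0
        rw [div_le_iff₀ hux] at this
        linarith
      have habs : gδ x - gG x ≤ |gδ x - gG x| := le_abs_self _
      show 2 * (1 + k * C₀ * x) * (k * C₀) * (CG x - Cδ x) +
        (1 + k * C₀ * x) ^ 2 *
          ((-k * ((CG x) ^ 2 + gG x)) - (-k * ((Cδ x) ^ 2 + gδ x))) < k * h x + ε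
      have hhx : h x = |gδ x - gG x| * (1 + k * C₀ * x) ^ 2 := by
        simp [hh, max_eq_left hx0]
      rw [hhx]
      nlinarith [mul_nonneg (mul_nonneg (mul_pos hk hux).le hd.le)
          (by linarith : (0:ℝ) ≤ Cδ x * (1 + k * C₀ * x) + CG x * (1 + k * C₀ * x) - 2 * C₀),
        mul_le_mul_of_nonneg_left habs
          (by positivity : (0:ℝ) ≤ k * (1 + k * C₀ * x) ^ 2)]
  have hmain : (1 + k * C₀ * t) ^ 2 * (CG t - Cδ t) ≤ k * H t := by
    refine le_of_forall_pos_le_add fun ε' hε' => ?_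
    have h1 := key (ε' / (1 + t)) (by positivity)
    have h2 : ε' / (1 + t) * (1 + t) = ε' := div_mul_cancel₀ _ ht1.ne'
    linarith
  have hHt : H t = ∫ τ in (0:ℝ)..t, |gδ τ - gG τ| * (1 + k * C₀ * τ) ^ 2 := by
    apply intervalIntegral.integral_congr
    intro τ hτ
    rw [uIcc_of_le ht] at hτ
    simp [hh, max_eq_left hτ.1]
  rw [hHt] at hmain
  exact hmain

/-- Weighted Grönwall-type estimate: the difference between the two mean concentrations is
controlled by the difference of their forcing terms,
`|C̄_G(t) − C̄_δ(t)| ≤ (k/(1 + k C₀ t)²) ∫₀ᵗ |g_δ(τ) − g_G(τ)| (1 + k C₀ τ)² dτ`. -/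
theorem meanConcentration_difference_bound (k C₀ : ℝ) (hk : 0 < k) (hC₀ : 0 < C₀)
    (gδ gG Cδ CG : ℝ → ℝ)
    (hgδ_cont : ContinuousOn gδ (Set.Ici 0))
    (hgG_cont : ContinuousOn gG (Set.Ici 0))
    (hgδ_nonpos : ∀ t ∈ Set.Ici (0 : ℝ), gδ t ≤ 0)
    (hgG_nonpos : ∀ t ∈ Set.Ici (0 : ℝ), gG t ≤ 0)
    (hinitδ : Cδ 0 = C₀) (hinitG : CG 0 = C₀)
    (hderivδ : ∀ t ∈ Set.Ici (0 : ℝ),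
      HasDerivWithinAt Cδ (-k * ((Cδ t) ^ 2 + gδ t)) (Set.Ici 0) t)
    (hderivG : ∀ t ∈ Set.Ici (0 : ℝ),
      HasDerivWithinAt CG (-k * ((CG t) ^ 2 + gG t)) (Set.Ici 0) t) :
    ∀ t ∈ Set.Ici (0 : ℝ),
      |CG t - Cδ t| ≤ k / (1 + k * C₀ * t) ^ 2 *
        ∫ τ in (0 : ℝ)..t, |gδ τ - gG τ| * (1 + k * C₀ * τ) ^ 2 := by
  intro t ht
  have ht0 : (0:ℝ) ≤ t := ht
  have hw : (0:ℝ) < (1 + k * C₀ * t) ^ 2 := by positivity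
  have h1 := conc_diff_one_side k C₀ hk hC₀ gδ gG Cδ CG hgδ_cont hgG_cont
    hgδ_nonpos hgG_nonpos hinitδ hinitG hderivδ hderivG t ht
  have h2 := conc_diff_one_side k C₀ hk hC₀ gG gδ CG Cδ hgG_cont hgδ_cont
    hgG_nonpos hgδ_nonpos hinitG hinitδ hderivG hderivδ t ht
  have hInt : (∫ τ in (0:ℝ)..t, |gG τ - gδ τ| * (1 + k * C₀ * τ) ^ 2) =
      ∫ τ in (0:ℝ)..t, |gδ τ - gG τ| * (1 + k * C₀ * τ) ^ 2 :=
    intervalIntegral.integral_congr fun τ _ => by rw [abs_sub_comm]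
  rw [hInt] at h2
  set I := ∫ τ in (0:ℝ)..t, |gδ τ - gG τ| * (1 + k * C₀ * τ) ^ 2
  rw [abs_le]
  constructor
  · rw [div_mul_eq_mul_div, neg_le, le_div_iff₀ hw]
    nlinarith
  · rw [div_mul_eq_mul_div, le_div_iff₀ hw]
    nlinarith
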